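/- For every natural number k ≥ 1, π/4 = 2·arctan(1/φ^{2k}) + arctan((−2 + (L_{2k} − 2)·φ^{2k})/(−2 + (L_{2k} + 2)·φ^{2k})). -/

import Mathlib

open Real

/-- The Lucas numbers: `L 0 = 2`, `L 1 = 1`, `L (n+2) = L (n+1) + L n`. -/
def L : ℕ → ℝ
  | 0 => 2
  | 1 => 1
  | (n + 2) => L (n + 1) + L n

/-- The golden ratio `φ = (1 + √5)/2`. -/
noncomputable def phi : ℝ := (1 + Real.sqrt 5) / 2

noncomputable def psi : ℝ := (1 - Real.sqrt 5) / 2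

lemma sqrt5_sq : Real.sqrt 5 ^ 2 = 5 := Real.sq_sqrt (by norm_num)

lemma L_eq (n : ℕ) : L n = phi ^ n + psi ^ n := by
  induction n using Nat.strong_induction_on with
  | _ n ih =>
    match n with
    | 0 => norm_num [L]
    | 1 => show (1:ℝ) = phi ^ 1 + psi ^ 1; simp [phi, psi]
    | (m + 2) =>
      have h1 := ih (m + 1) (by omega)
      have h0 := ih m (by omega)
      have hphi : phi ^ 2 = phi + 1 := by
        have := sqrt5_sq; unfold phi; nlinarith
      have hpsi : psi ^ 2 = psi + 1 := by
        have := sqrt5_sq; unfold psi; nlinarith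
      have e1 : phi ^ (m + 2) = phi ^ (m+1) + phi ^ m := by
        have : phi ^ (m + 2) = phi ^ m * phi ^ 2 := by ring
        rw [this, hphi]; ring
      have e2 : psi ^ (m + 2) = psi ^ (m+1) + psi ^ m := by
        have : psi ^ (m + 2) = psi ^ m * psi ^ 2 := by ring
        rw [this, hpsi]; ring
      show L (m+1) + L m = _
      rw [h1, h0, e1, e2]; ring

lemma phi_mul_psi : phi * psi = -1 := by
  have := sqrt5_sq; unfold phi psi; nlinarith

lemma phi_gt_one : 1 < phi := by
  have : (2:ℝ) < Real.sqrt 5 := by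
    nlinarith [sqrt5_sq, Real.sqrt_nonneg 5]
  unfold phi; linarith

theorem pi_four_eq_arctan_phi_even (k : ℕ) (hk : 1 ≤ k) :
    π / 4 = 2 * arctan (1 / phi ^ (2 * k)) +
      arctan ((-2 + (L (2 * k) - 2) * phi ^ (2 * k)) /
        (-2 + (L (2 * k) + 2) * phi ^ (2 * k))) := by
  set t : ℝ := phi ^ (2 * k) with hT
  have ht : 1 < t := by
    apply one_lt_pow₀ phi_gt_one; omega
  have ht0 : 0 < t := by linarith
  have hpsit : psi ^ (2 * k) * t = 1 := by
    rw [hT, ← mul_pow]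
    have : psi * phi = -1 := by rw [mul_comm]; exact phi_mul_psi
    rw [this]
    simp [pow_mul]
  have hL : L (2 * k) * t = t ^ 2 + 1 := by
    rw [L_eq, add_mul, hpsit, ← hT, sq]
  have hnum : -2 + (L (2 * k) - 2) * t = t ^ 2 - 2 * t - 1 := by
    linear_combination hL
  have hden : -2 + (L (2 * k) + 2) * t = t ^ 2 + 2 * t - 1 := by
    linear_combination hL
  rw [hnum, hden]
  have h1 : -1 < 1 / t := by
    have : (0:ℝ) < 1 / t := by positivity
    linarith
  have h2 : 1 / t < 1 := by
    rw [div_lt_one ht0]; linarith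
  rw [Real.two_mul_arctan h1 h2]
  have ht2 : (0:ℝ) < t ^ 2 - 1 := by nlinarith
  have htd : (0:ℝ) < t ^ 2 + 2 * t - 1 := by nlinarith
  have harg : 2 * (1 / t) / (1 - (1 / t) ^ 2) = 2 * t / (t ^ 2 - 1) := by
    field_simp
  rw [harg]
  have hmul : 2 * t / (t ^ 2 - 1) * ((t ^ 2 - 2 * t - 1) / (t ^ 2 + 2 * t - 1)) < 1 := by
    rw [div_mul_div_comm, div_lt_one (by positivity)]
    nlinarith
  rw [Real.arctan_add hmul]
  have : (2 * t / (t ^ 2 - 1) + (t ^ 2 - 2 * t - 1) / (t ^ 2 + 2 * t - 1)) /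
      (1 - 2 * t / (t ^ 2 - 1) * ((t ^ 2 - 2 * t - 1) / (t ^ 2 + 2 * t - 1))) = 1 := by
    rw [div_eq_one_iff_eq]
    · rw [div_add_div _ _ ht2.ne' htd.ne', div_mul_div_comm,
        one_sub_div (mul_ne_zero ht2.ne' htd.ne'), div_left_inj' (mul_ne_zero ht2.ne' htd.ne')]
      ring
    · rw [div_mul_div_comm]
      intro h
      have := sub_eq_zero.mp h
      rw [eq_comm, div_eq_one_iff_eq (by positivity)] at this
      nlinarith
  rw [this, Real.arctan_one]
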